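/- Let Γ = Γ₁ ∗_Σ Γ₂ be an amalgamated free product with Comm¹_{Γᵢ}(Σ) = Σ for i ∈ {1,2}. If g, h ∈ Γ satisfy [Σ : Σ ∩ h(Σ ∩ gΣg⁻¹)h⁻¹] < ∞, then g ∈ Σ and h ∈ Σ. -/

import Mathlib

open Monoid PushoutI

/-- The conjugate subgroup `g S g⁻¹`. -/
def conjSub {G : Type*} [Group G] (g : G) (S : Subgroup G) : Subgroup G :=
  S.map (MulAut.conj g).toMonoidHom

section General

variable {G : Type*} [Group G]

theorem mem_conjSub {c x : G} {S : Subgroup G} :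
    x ∈ conjSub c S ↔ c⁻¹ * x * c ∈ S := by
  constructor
  · rintro ⟨s, hs, rfl⟩
    simpa [MulAut.conj_apply, mul_assoc] using hs
  · intro h
    exact ⟨c⁻¹ * x * c, h, by simp [MulAut.conj_apply]; group⟩

theorem conjSub_mul (a b : G) (S : Subgroup G) :
    conjSub (a * b) S = conjSub a (conjSub b S) := by
  ext x
  simp only [mem_conjSub, mul_inv_rev, mul_assoc]

theorem conjSub_eq_self {c : G} {S : Subgroup G} (hc : c ∈ S) :
    conjSub c S = S := by
  ext x
  rw [mem_conjSub]
  constructor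
  · intro h
    have := S.mul_mem (S.mul_mem hc h) (S.inv_mem hc)
    simpa [mul_assoc] using this
  · intro h
    exact S.mul_mem (S.mul_mem (S.inv_mem hc) h) hc

theorem relindex_conjSub (c : G) (K L : Subgroup G) :
    (conjSub c K).relIndex (conjSub c L) = K.relIndex L := by
  unfold conjSub
  rw [Subgroup.map_equiv_eq_comap_symm' (MulAut.conj c) K, Subgroup.relIndex_comap,
    Subgroup.map_map]
  congr 1
  have : ((MulAut.conj c).symm.toMonoidHom.comp (MulAut.conj c).toMonoidHom)
      = MonoidHom.id G := by
    ext x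
    simp
  rw [this, Subgroup.map_id]

theorem relindex_ne_zero_of_le {K K' L : Subgroup G} (h : K ≤ K')
    (hK : K.relIndex L ≠ 0) : K'.relIndex L ≠ 0 :=
  fun h0 => hK (Subgroup.relIndex_eq_zero_of_le_left h h0)

end General

section Pushout

variable {ι : Type*} {H : Type*} {G : ι → Type*} [Group H] [∀ i, Group (G i)]
  {φ : ∀ i, H →* G i}

/-- The word underlying a normal word is reduced. -/
theorem normalWord_reduced {d : NormalWord.Transversal φ} (w : NormalWord d) :
    Reduced φ w.toWord := by
  rintro ⟨i, t⟩ hmem ⟨r, hr⟩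
  have h1 : t ∈ d.set i := w.normalized i t hmem
  have h2 : t ≠ 1 := w.ne_one ⟨i, t⟩ hmem
  have htr : t ∈ ((φ i).range : Set (G i)) := ⟨r, hr⟩
  have e1 := (d.compl i).equiv_fst_eq_self_of_mem_of_one_mem (d.one_mem i) htr
  have e2 := (d.compl i).equiv_fst_eq_one_of_mem_of_one_mem (Subgroup.one_mem _) h1
  rw [e1] at e2
  exact h2 (congrArg Subtype.val e2)

/-- The image in the pushout of the product of a reduced word all of whose letters lie
outside the base is not in the base. -/
theorem neword_prod_not_in_base (hφ : ∀ i, Function.Injective (φ i)) {a b : ι}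
    (V : CoprodI.NeWord G a b)
    (hV : ∀ l ∈ V.toList, Sigma.snd l ∉ (φ l.1).range) :
    ofCoprodI (φ := φ) V.prod ∉ (base φ).range := by
  intro hmem
  have hred : Reduced φ V.toWord := fun l hl => hV l hl
  have := hred.eq_empty_of_mem_range hφ hmem
  exact V.toList_ne_nil (congrArg CoprodI.Word.toList this)

theorem inv_neword_reduced {a b : ι} (V : CoprodI.NeWord G a b)
    (hV : ∀ l ∈ V.toList, Sigma.snd l ∉ (φ l.1).range) :
    ∀ l ∈ V.inv.toList, Sigma.snd l ∉ (φ l.1).range := by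
  induction V with
  | singleton x hx =>
      intro l hl
      simp only [CoprodI.NeWord.inv, CoprodI.NeWord.toList, List.mem_singleton] at hl
      subst hl
      intro hr
      exact hV ⟨_, x⟩ (by simp) (inv_mem_iff.mp hr)
  | append w₁ hne w₂ ih₁ ih₂ =>
      intro l hl
      simp only [CoprodI.NeWord.inv, CoprodI.NeWord.toList, List.mem_append] at hl
      rcases hl with hl | hl
      · exact ih₂ (fun l hl => hV l (by simp [hl])) l hl
      · exact ih₁ (fun l hl => hV l (by simp [hl])) l hl

/-- Conjugating a letter not in the base by a reduced word whose first index differs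
from the letter's index gives an element not in the base. -/
theorem conj_letter_not_in_base (hφ : ∀ i, Function.Injective (φ i))
    {w : CoprodI.Word G} (hw : Reduced φ w) {j : ι} {y : G j} (hy : y ∉ (φ j).range)
    (hne : w.fstIdx ≠ some j) :
    (ofCoprodI (φ := φ) w.prod)⁻¹ * of (φ := φ) j y * ofCoprodI w.prod ∉
      (base φ).range := by
  have hy1 : y ≠ 1 := fun h => hy (h ▸ Subgroup.one_mem _)
  by_cases hemp : w = CoprodI.Word.empty
  · subst hemp
    intro hmem
    have hV : ∀ l ∈ (CoprodI.NeWord.singleton y hy1).toList,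
        Sigma.snd l ∉ (φ l.1).range := by
      intro l hl
      simp only [CoprodI.NeWord.toList, List.mem_singleton] at hl
      subst hl
      exact hy
    exact neword_prod_not_in_base hφ (CoprodI.NeWord.singleton y hy1) hV
      (by simpa using hmem)
  · obtain ⟨k, l, w', hw'⟩ := CoprodI.NeWord.of_word w hemp
    have hk : w.fstIdx = some k := by
      rw [← hw']
      show (w'.toList.head?).map Sigma.fst = some k
      rw [CoprodI.NeWord.toList_head?]
      rfl
    have hkj : k ≠ j := by
      intro h
      exact hne (h ▸ hk)
    have hletters : ∀ l ∈ w'.toList, Sigma.snd l ∉ (φ l.1).range := by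
      intro l hl
      refine hw l ?_
      rw [← hw']
      exact hl
    intro hmem
    refine neword_prod_not_in_base hφ
      (CoprodI.NeWord.append
        (CoprodI.NeWord.append w'.inv hkj (CoprodI.NeWord.singleton y hy1))
        hkj.symm w') ?_ ?_
    · intro l hl
      simp only [CoprodI.NeWord.toList, List.mem_append, List.mem_singleton] at hl
      rcases hl with (hl | rfl) | hl
      · exact inv_neword_reduced w' hletters l hl
      · exact hy
      · exact hletters l hl
    · have hprod : w'.prod = w.prod := by rw [← hw']; rfl
      simp only [CoprodI.NeWord.append_prod, CoprodI.NeWord.prod_singleton,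
        CoprodI.NeWord.inv_prod, hprod, map_mul, map_inv, ofCoprodI_of]
      exact hmem

theorem aux_word_empty (hφ : ∀ i, Function.Injective (φ i))
    (hyp : ∀ (i : ι) (x : G i), x ∉ (φ i).range →
      (conjSub (of (φ := φ) i x) (base φ).range).relIndex (base φ).range = 0)
    (σ : H) (w : CoprodI.Word G) (hw : Reduced φ w)
    (hfin : (conjSub (base φ σ * ofCoprodI w.prod) (base φ).range).relIndex
      (base φ).range ≠ 0) : w = CoprodI.Word.empty := by
  induction w using CoprodI.Word.consRecOn with
  | empty => rfl
  | cons i x v hv1 hx1 _ =>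
    exfalso
    have hx : x ∉ (φ i).range := hw ⟨i, x⟩ (by simp [CoprodI.Word.cons])
    have hvred : Reduced φ v := fun l hl => hw l (by simp [CoprodI.Word.cons, hl])
    set B := (base φ).range with hB
    set c : PushoutI φ := base φ σ * of (φ := φ) i x with hc
    set u : PushoutI φ := ofCoprodI v.prod with hu
    have hg : base φ σ * ofCoprodI (CoprodI.Word.cons x v hv1 hx1).prod = c * u := by
      rw [CoprodI.Word.prod_cons, map_mul, ofCoprodI_of, hc, hu, mul_assoc]
    rw [hg] at hfin
    -- B ⊓ conjSub (c * u) B ≤ conjSub c B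
    have hle : B ⊓ conjSub (c * u) B ≤ conjSub c B := by
      intro t ht
      obtain ⟨ht1, ht2⟩ := Subgroup.mem_inf.mp ht
      rw [mem_conjSub] at ht2 ⊢
      by_contra hcon
      -- compute c⁻¹ * t * c as a letter
      obtain ⟨τ, hτ⟩ := ht1
      have hyval : c⁻¹ * t * c = of (φ := φ) i (x⁻¹ * φ i (σ⁻¹ * τ * σ) * x) := by
        have h1 : of (φ := φ) i (x⁻¹ * φ i (σ⁻¹ * τ * σ) * x)
            = (of (φ := φ) i x)⁻¹ * (base φ σ)⁻¹ * base φ τ * base φ σ *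
              of (φ := φ) i x := by
          simp only [map_mul, map_inv, of_apply_eq_base]
          group
        rw [← hτ, hc, h1]
        group
      set y : G i := x⁻¹ * φ i (σ⁻¹ * τ * σ) * x with hydef
      have hynr : y ∉ (φ i).range := by
        rintro ⟨r, hr⟩
        apply hcon
        rw [hyval, ← hr, of_apply_eq_base]
        exact ⟨r, rfl⟩
      refine conj_letter_not_in_base hφ hvred hynr hv1 ?_
      have heq : (ofCoprodI (φ := φ) v.prod)⁻¹ * of (φ := φ) i y *
          ofCoprodI (φ := φ) v.prod = (c * u)⁻¹ * t * (c * u) := by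
        rw [show of (φ := φ) i y = c⁻¹ * t * c from hyval.symm, hu]
        group
      rw [heq]
      exact ht2
    have hcind : (conjSub c B).relIndex B ≠ 0 := by
      refine relindex_ne_zero_of_le hle ?_
      rw [Subgroup.inf_relIndex_left]
      exact hfin
    have : (conjSub (of (φ := φ) i x) B).relIndex B ≠ 0 := by
      have hbσ : base φ σ ∈ B := ⟨σ, rfl⟩
      rw [hc, conjSub_mul] at hcind
      rw [← relindex_conjSub (base φ σ), conjSub_eq_self hbσ]
      exact hcind
    exact this (hyp i x hx)

theorem mem_base_of_relindex_ne_zero (hφ : ∀ i, Function.Injective (φ i))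
    (hyp : ∀ (i : ι) (x : G i), x ∉ (φ i).range →
      (conjSub (of (φ := φ) i x) (base φ).range).relIndex (base φ).range = 0)
    (g : PushoutI φ)
    (hg : (conjSub g (base φ).range).relIndex (base φ).range ≠ 0) :
    g ∈ (base φ).range := by
  classical
  obtain ⟨d⟩ := NormalWord.transversal_nonempty φ hφ
  set W : NormalWord d := g • NormalWord.empty with hW
  have hgW : W.prod = g := by
    rw [hW, NormalWord.prod_smul, NormalWord.prod_empty, mul_one]
  have hdecomp : g = base φ W.head * ofCoprodI W.toWord.prod := by
    rw [← hgW]; rfl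
  have hred : Reduced φ W.toWord := normalWord_reduced W
  have hempty : W.toWord = CoprodI.Word.empty := by
    apply aux_word_empty hφ hyp W.head W.toWord hred
    rw [← hdecomp]
    exact hg
  rw [hdecomp, hempty, CoprodI.Word.prod_empty, map_one, mul_one]
  exact ⟨W.head, rfl⟩

end Pushout

/-- If `Comm¹_{Γᵢ}(Σ) = Σ` for `i = 1, 2` and `[Σ : Σ ∩ h(Σ ∩ gΣg⁻¹)h⁻¹] < ∞`, then
`g, h ∈ Σ`. -/
theorem stmt9 {H : Type*} {G : Bool → Type*} [Group H] [∀ i, Group (G i)]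
    (φ : ∀ i, H →* G i) (hφ : ∀ i, Function.Injective (φ i))
    (hyp : ∀ (i : Bool) (x : G i), x ∉ (φ i).range →
      (conjSub (PushoutI.of (φ := φ) i x) (PushoutI.base φ).range).relIndex
        (PushoutI.base φ).range = 0)
    (g h : PushoutI φ)
    (hfin : (conjSub h ((PushoutI.base φ).range ⊓
        conjSub g (PushoutI.base φ).range)).relIndex (PushoutI.base φ).range ≠ 0) :
    g ∈ (PushoutI.base φ).range ∧ h ∈ (PushoutI.base φ).range := by
  set B := (PushoutI.base φ).range with hB
  have hle1 : conjSub h (B ⊓ conjSub g B) ≤ conjSub h B :=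
    Subgroup.map_mono inf_le_left
  have hle2 : conjSub h (B ⊓ conjSub g B) ≤ conjSub (h * g) B := by
    rw [conjSub_mul]
    exact Subgroup.map_mono inf_le_right
  have hh : h ∈ B :=
    mem_base_of_relindex_ne_zero hφ hyp h (relindex_ne_zero_of_le hle1 hfin)
  have hhg : h * g ∈ B :=
    mem_base_of_relindex_ne_zero hφ hyp (h * g) (relindex_ne_zero_of_le hle2 hfin)
  refine ⟨?_, hh⟩
  have := B.mul_mem (B.inv_mem hh) hhg
  simpa using this
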